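/- arXiv:2004.14233 — 3 statements merged into one kernel-verified Lean document; each statement's English description precedes it below -/
import Mathlib

section
/- A functor from the empty category to a small category C has the left lifting property with respect to all functors that are surjective on objects and full if and only if C is a free category (i.e. isomorphic to the path category of some quiver). -/
open CategoryTheory

universe u


namespace LLPFree2

variable {C : Type u} [SmallCategory C]

/-- The easy direction: path categories have the lifting property. -/
theorem easy {Q : Type u} [Quiver.{u+1} Q]
    {X Y : Type u} [SmallCategory X] [SmallCategory Y] (p : X ⥤ Y)
    (hsurj : Function.Surjective p.obj) (hfull : p.Full)
    (H : Paths Q ⥤ Y) : ∃ L : Paths Q ⥤ X, L ⋙ p = H := by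
  letI := hfull
  have hp : ∀ y, p.obj (Function.surjInv hsurj y) = y := Function.surjInv_eq hsurj
  let φ : Q ⥤q X :=
    { obj := fun a => Function.surjInv hsurj (H.obj a)
      map := fun {a b} f =>
        p.preimage (eqToHom (hp (H.obj a)) ≫ H.map f.toPath ≫ eqToHom (hp (H.obj b)).symm) }
  refine ⟨Paths.lift φ, ?_⟩
  have hobj : (Paths.lift φ ⋙ p).obj = H.obj := funext fun a => hp (H.obj a)
  apply Paths.ext_functor hobj
  intro a b e
  have h1 : (Paths.lift φ ⋙ p).map e.toPath = p.map (φ.map e) := by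
    exact congrArg p.map (Paths.lift_toPath φ e)
  rw [h1]
  show p.map (p.preimage _) = _
  rw [p.map_preimage]
  rfl

end LLPFree2

namespace LLPFree2

variable {C : Type u} [SmallCategory C]

def NId {a b : C} (f : a ⟶ b) : Prop := ∃ h : a = b, f = eqToHom h

structure Vq (C : Type u) [SmallCategory C] : Type u where
  as : C

instance instVq : Quiver.{u} (Vq C) :=
  ⟨fun a b => {f : a.as ⟶ b.as // ¬ NId f}⟩

def incl : Vq C ⥤q C := ⟨Vq.as, Subtype.val⟩

def pV (C : Type u) [SmallCategory C] : Paths (Vq C) ⥤ C := Paths.lift incl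

theorem pV_surj : Function.Surjective (pV C).obj := fun c => ⟨⟨c⟩, rfl⟩

theorem pV_full : (pV C).Full := by
  constructor
  intro X Y f
  by_cases h : NId f
  · obtain ⟨h, rfl⟩ := h
    have h' : X = Y := congrArg Vq.mk h
    refine ⟨eqToHom h', ?_⟩
    rw [eqToHom_map (pV C) h']
  · refine ⟨@Quiver.Hom.toPath (Vq C) _ X Y ⟨f, h⟩, ?_⟩
    exact Paths.lift_toPath incl (X := X) (Y := Y) ⟨f, h⟩

theorem path_single {V : Type u} [Quiver.{u} V] {x y : V} (P : Quiver.Path x y)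
    (h : P.length = 1) : ∃ ε : x ⟶ y, P = ε.toPath := by
  cases P with
  | nil => simp at h
  | cons P ε =>
    have h0 : P.length = 0 := by simpa using h
    obtain rfl := Quiver.Path.eq_of_length_zero P h0
    obtain rfl := Quiver.Path.eq_nil_of_length_zero P h0
    exact ⟨ε, rfl⟩

section Retract

variable (L : C ⥤ Paths (Vq C))

/-- The length grading induced by the section `L`. -/
def ell {a b : C} (f : a ⟶ b) : ℕ :=
  @Quiver.Path.length (Vq C) instVq _ _ (L.map f)

theorem ell_id (c : C) : ell L (𝟙 c) = 0 := by
  unfold ell; rw [L.map_id]; rfl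

theorem ell_comp {a b c : C} (f : a ⟶ b) (g : b ⟶ c) :
    ell L (f ≫ g) = ell L f + ell L g := by
  unfold ell; rw [L.map_comp]
  exact Quiver.Path.length_comp _ _

theorem ell_eqToHom {a b : C} (h : a = b) : ell L (eqToHom h) = 0 := by
  subst h; simpa using ell_id L a

/-- Sum of the gradings of the edges of a path of non-identity morphisms. -/
def esum {x y : Vq C} (P : Quiver.Path x y) : ℕ :=
  @Quiver.Path.rec (Vq C) instVq x (fun _ _ => ℕ) 0
    (fun _ e ih => ih + ell L (Subtype.val e)) y P

@[simp] theorem esum_nil {x : Vq C} : esum L (Quiver.Path.nil (a := x)) = 0 := rfl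

@[simp] theorem esum_cons {x y z : Vq C} (P : Quiver.Path x y) (e : y ⟶ z) :
    esum L (P.cons e) = esum L P + ell L (Subtype.val e) := rfl

/-- All edges of the path have grading 1. -/
def AllOne {x y : Vq C} (P : Quiver.Path x y) : Prop :=
  @Quiver.Path.rec (Vq C) instVq x (fun _ _ => Prop) True
    (fun P' e ih => ih ∧ ell L (Subtype.val e) = 1) y P

theorem AllOne_nil {x : Vq C} : AllOne L (Quiver.Path.nil (a := x)) := trivial

theorem AllOne_cons {x y z : Vq C} (P : Quiver.Path x y) (e : y ⟶ z) :
    AllOne L (P.cons e) = (AllOne L P ∧ ell L (Subtype.val e) = 1) := rfl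

/-- The quiver of atoms (grading-1 morphisms). -/
structure Qt (L : C ⥤ Paths (Vq C)) : Type u where
  as : C

instance instQt : Quiver.{u} (Qt L) :=
  ⟨fun a b => {f : a.as ⟶ b.as // ell L f = 1}⟩

def toQt (x : Vq C) : Qt L := ⟨x.as⟩

def inclQ : Qt L ⥤q C := ⟨Qt.as, Subtype.val⟩

def FQ : Paths (Qt L) ⥤ C := Paths.lift (inclQ L)

theorem allone_cons {x y z : Vq C} (P : Quiver.Path x y) (e : y ⟶ z)
    (h : AllOne L (P.cons e)) : AllOne L P ∧ ell L (Subtype.val e) = 1 := h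

/-- Convert a path of non-identity morphisms, all of grading 1, into a path of atoms. -/
def toQ {x y : Vq C} (P : Quiver.Path x y) :
    AllOne L P → @Quiver.Path (Qt L) (instQt L) (toQt L x) (toQt L y) :=
  @Quiver.Path.rec (Vq C) instVq x
    (fun y P => AllOne L P → @Quiver.Path (Qt L) (instQt L) (toQt L x) (toQt L y))
    (fun _ => .nil)
    (fun P e ih h => (ih h.1).cons ⟨Subtype.val e, h.2⟩) y P

/-- `toQ` as a morphism in the path category. -/
def toQh {x y : Vq C} (P : Quiver.Path x y) (h : AllOne L P) :
    (Paths.of (Qt L)).obj (toQt L x) ⟶ (Paths.of (Qt L)).obj (toQt L y) := toQ L P h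

theorem toQ_congr {x y : Vq C} {P P' : Quiver.Path x y} (hPP : P = P') {h : AllOne L P}
    {h' : AllOne L P'} : toQ L P h = toQ L P' h' := by subst hPP; rfl

theorem toQh_congr {x y : Vq C} {P P' : Quiver.Path x y} (hPP : P = P') {h : AllOne L P}
    {h' : AllOne L P'} : toQh L P h = toQh L P' h' := toQ_congr L hPP

theorem toQ_comp {x y z : Vq C} (P : Quiver.Path x y) (P' : Quiver.Path y z)
    (h : AllOne L (P.comp P')) (h1 : AllOne L P) (h2 : AllOne L P') :
    toQ L (P.comp P') h = (toQ L P h1).comp (toQ L P' h2) := by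
  induction P' with
  | nil => exact toQ_congr L rfl
  | cons P'' e ih =>
      have hc := allone_cons L (P.comp P'') e h
      have hc2 := allone_cons L P'' e h2
      have hih := ih hc.1 hc2.1
      exact congrArg (fun q => Quiver.Path.cons q (⟨Subtype.val e, hc.2⟩ :
        (toQt L _ : Qt L) ⟶ toQt L _)) hih

theorem toQh_comp {x y z : Vq C} (P : Quiver.Path x y) (P' : Quiver.Path y z)
    (h : AllOne L (P.comp P')) (h1 : AllOne L P) (h2 : AllOne L P') :
    toQh L (P.comp P') h = toQh L P h1 ≫ toQh L P' h2 :=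
  toQ_comp L P P' h h1 h2

theorem FQ_toQ {x y : Vq C} (P : Quiver.Path x y) (h : AllOne L P) :
    (FQ L).map (toQh L P h) = (pV C).map P := by
  induction P with
  | nil => rfl
  | cons P e ih =>
      have hc := allone_cons L P e h
      show (FQ L).map (toQh L P hc.1) ≫ Subtype.val e = (pV C).map P ≫ Subtype.val e
      rw [ih hc.1]
      rfl

variable (hL : L ⋙ pV C = 𝟭 C)
include hL

theorem hobj (c : C) : Vq.as (L.obj c) = c := Functor.congr_obj hL c

theorem hmap {a b : C} (f : a ⟶ b) :
    (pV C).map (L.map f) = eqToHom (hobj L hL a) ≫ f ≫ eqToHom (hobj L hL b).symm := by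
  have := Functor.congr_hom hL f
  simp only [Functor.comp_map, Functor.id_map] at this
  exact this

theorem nid_of_ell_zero {a b : C} (f : a ⟶ b) (h : ell L f = 0) : NId f := by
  have h1 : L.obj a = L.obj b :=
    @Quiver.Path.eq_of_length_zero (Vq C) instVq _ _ (L.map f) h
  have hab : a = b := (hobj L hL a).symm.trans ((congrArg Vq.as h1).trans (hobj L hL b))
  refine ⟨hab, ?_⟩
  subst hab
  have h2 : L.map f = 𝟙 (L.obj a) :=
    @Quiver.Path.eq_nil_of_length_zero (Vq C) instVq _ (L.map f) h
  have h3 := hmap L hL f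
  rw [h2, (pV C).map_id] at h3
  simp only [eqToHom_refl]
  have h4 : eqToHom (hobj L hL a) ≫ f ≫ eqToHom (hobj L hL a).symm = 𝟙 _ := h3.symm
  rw [eqToHom_comp_iff, comp_eqToHom_iff] at h4
  simpa using h4

theorem ell_edge_pos {x y : Vq C} (e : x ⟶ y) : 1 ≤ ell L (Subtype.val e) := by
  rw [Nat.one_le_iff_ne_zero]
  intro h0
  exact (Subtype.prop e) (nid_of_ell_zero L hL _ h0)

omit hL in
theorem ell_pVmap {x y : Vq C} (P : Quiver.Path x y) :
    ell L ((pV C).map P) = esum L P := by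
  induction P with
  | nil =>
      have h0 : (pV C).map (𝟙 (show Paths (Vq C) from x)) = 𝟙 x.as := (pV C).map_id x
      have h1 : ell L ((pV C).map (𝟙 (show Paths (Vq C) from x))) = 0 := by
        rw [h0]; exact ell_id L _
      exact h1
  | cons P e ih =>
      have h1 : (pV C).map (P.cons e) = (pV C).map P ≫ (pV C).map (Quiver.Hom.toPath e) :=
        (pV C).map_comp P (Quiver.Hom.toPath e)
      have h2 : (pV C).map (Quiver.Hom.toPath e) = Subtype.val e := Paths.lift_toPath incl e
      rw [h1, ell_comp, ih, h2]
      simp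
      rfl

theorem length_le_esum {x y : Vq C} (P : Quiver.Path x y) :
    P.length ≤ esum L P := by
  induction P with
  | nil => simp
  | cons P e ih =>
      have h2 := ell_edge_pos L hL e
      simp only [esum_cons, Quiver.Path.length_cons]
      omega

theorem allone_of {x y : Vq C} (P : Quiver.Path x y) :
    esum L P ≤ P.length → AllOne L P := by
  induction P with
  | nil => intro _; exact AllOne_nil L
  | cons P e ih =>
      intro h
      have h1 := length_le_esum L hL P
      have h2 := ell_edge_pos L hL e
      simp only [esum_cons, Quiver.Path.length_cons] at h
      rw [AllOne_cons]
      exact ⟨ih (by omega), by omega⟩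

theorem esum_Lmap {a b : C} (f : a ⟶ b) : esum L (L.map f) = ell L f := by
  have h1 := ell_pVmap L (L.map f)
  have h2 : ell L (eqToHom (hobj L hL a) ≫ f ≫ eqToHom (hobj L hL b).symm) = ell L f := by
    rw [ell_comp, ell_comp, ell_eqToHom, ell_eqToHom]; omega
  exact (ell_pVmap L (L.map f)).symm.trans ((congrArg (ell L) (hmap L hL f)).trans h2)

theorem allone_Lmap {a b : C} (f : a ⟶ b) : AllOne L (L.map f) :=
  allone_of L hL _ (by rw [esum_Lmap L hL f]; exact le_refl _)

theorem hobjQ (c : C) :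
    @Eq (Paths (Qt L)) (Qt.mk c) ((Paths.of (Qt L)).obj (toQt L (L.obj c))) :=
  congrArg Qt.mk (hobj L hL c).symm

/-- The candidate inverse functor. -/
def GQ : C ⥤ Paths (Qt L) where
  obj c := ⟨c⟩
  map {a b} f :=
    eqToHom (hobjQ L hL a) ≫ toQh L (L.map f) (allone_Lmap L hL f) ≫ eqToHom (hobjQ L hL b).symm
  map_id c := by
    have h0 : toQh L (L.map (𝟙 c)) (allone_Lmap L hL (𝟙 c)) =
        𝟙 ((Paths.of (Qt L)).obj (toQt L (L.obj c))) :=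
      toQh_congr L (L.map_id c) (h' := trivial)
    rw [h0]
    erw [Category.id_comp, eqToHom_trans, eqToHom_refl]
  map_comp {a b c} f g := by
    have hA : AllOne L (L.map f ≫ L.map g) :=
      (L.map_comp f g) ▸ allone_Lmap L hL (f ≫ g)
    have h0 : toQh L (L.map (f ≫ g)) (allone_Lmap L hL (f ≫ g)) =
        toQh L (L.map f) (allone_Lmap L hL f) ≫ toQh L (L.map g) (allone_Lmap L hL g) :=
      (toQh_congr L (L.map_comp f g) (h' := hA)).trans
        (toQh_comp L _ _ hA (allone_Lmap L hL f) (allone_Lmap L hL g))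
    rw [h0]
    erw [Category.assoc, Category.assoc, Category.assoc, eqToHom_trans_assoc, eqToHom_refl, Category.id_comp]

theorem GF : GQ L hL ⋙ FQ L = 𝟭 C := by
  refine CategoryTheory.Functor.ext (fun c => rfl) ?_
  intro a b f
  show (FQ L).map ((GQ L hL).map f) = _
  have h1 : (GQ L hL).map f =
      eqToHom (hobjQ L hL a) ≫ toQh L (L.map f) (allone_Lmap L hL f) ≫
        eqToHom (hobjQ L hL b).symm := rfl
  rw [h1]
  erw [Functor.map_comp, Functor.map_comp, eqToHom_map, eqToHom_map, FQ_toQ L _ (allone_Lmap L hL f)]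
  rw [hmap L hL f]
  simp
  erw [Category.assoc, Category.assoc, eqToHom_trans_assoc, eqToHom_trans]

theorem keyQ {a b : C} {u v : Vq C} (hu : u.as = a) (hv : v.as = b)
    (f : a ⟶ b) (g : u.as ⟶ v.as)
    (hg : g = eqToHom hu ≫ f ≫ eqToHom hv.symm)
    (hgl : ell L g = 1) (hfl : ell L f = 1) :
    eqToHom (show @Eq (Paths (Qt L)) (Qt.mk a) (Qt.mk u.as) from congrArg Qt.mk hu.symm) ≫
      Quiver.Hom.toPath (⟨g, hgl⟩ : (Qt.mk u.as : Qt L) ⟶ Qt.mk v.as) ≫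
      eqToHom (show @Eq (Paths (Qt L)) (Qt.mk v.as) (Qt.mk b) from congrArg Qt.mk hv) =
    Quiver.Hom.toPath (⟨f, hfl⟩ : (Qt.mk a : Qt L) ⟶ Qt.mk b) := by
  obtain ⟨ua⟩ := u
  obtain ⟨va⟩ := v
  dsimp only at hu hv hg ⊢
  subst hu
  subst hv
  have hgf : g = f := by simpa using hg
  subst hgf
  rfl

theorem FG : FQ L ⋙ GQ L hL = 𝟭 (Paths (Qt L)) := by
  refine Paths.ext_functor rfl ?_
  intro a b e
  have hF : (FQ L).map (Quiver.Hom.toPath e) = Subtype.val e :=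
    Paths.lift_toPath (inclQ L) e
  show (GQ L hL).map ((FQ L).map (Quiver.Hom.toPath e)) = _
  rw [hF]
  obtain ⟨ε, hε⟩ := path_single (V := Vq C) (L.map (Subtype.val e)) (Subtype.prop e)
  have hA : AllOne L (Quiver.Hom.toPath ε) := hε ▸ allone_Lmap L hL (Subtype.val e)
  have hGQ : (GQ L hL).map (Subtype.val e) =
      eqToHom (hobjQ L hL a.as) ≫ toQh L (Quiver.Hom.toPath ε) hA ≫
        eqToHom (hobjQ L hL b.as).symm := by
    show eqToHom (hobjQ L hL a.as) ≫ toQh L (L.map (Subtype.val e))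
        (allone_Lmap L hL (Subtype.val e)) ≫ eqToHom (hobjQ L hL b.as).symm = _
    rw [toQh_congr L hε (h' := hA)]
  refine hGQ.trans ?_
  have h4 := hmap L hL (Subtype.val e)
  rw [hε] at h4
  rw [show (pV C).map (Quiver.Hom.toPath ε) = Subtype.val ε from
    Paths.lift_toPath incl ε] at h4
  have hkey := keyQ L hL (hobj L hL a.as) (hobj L hL b.as) (Subtype.val e) (Subtype.val ε)
    h4 hA.2 (Subtype.prop e)
  exact hkey

end Retract

/-- Lifting the universe of the arrows of a quiver. -/
def UpQ (V : Type u) : Type u := V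

instance instUpQ (V : Type u) [Quiver.{u} V] : Quiver.{u+1} (UpQ V) :=
  ⟨fun a b => ULift.{u+1} (@Quiver.Hom V _ a b)⟩

def upP (V : Type u) [Quiver.{u} V] : V ⥤q Paths (UpQ V) :=
  ⟨fun a => (a : UpQ V),
    fun {a b} e => Quiver.Hom.toPath (V := UpQ V) (a := a) (b := b) (ULift.up e)⟩

def downP (V : Type u) [Quiver.{u} V] : UpQ V ⥤q Paths V :=
  ⟨fun a => (a : V), fun {a b} e => Quiver.Hom.toPath (V := V) (a := a) (b := b) e.down⟩

def upF (V : Type u) [Quiver.{u} V] : Paths V ⥤ Paths (UpQ V) := Paths.lift (upP V)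

def downF (V : Type u) [Quiver.{u} V] : Paths (UpQ V) ⥤ Paths V := Paths.lift (downP V)

theorem up_down (V : Type u) [Quiver.{u} V] : upF V ⋙ downF V = 𝟭 _ := by
  refine Paths.ext_functor rfl ?_
  intro a b e
  have h1 : (upF V).map e.toPath = Quiver.Hom.toPath (V := UpQ V) (a := a) (b := b) (ULift.up e) :=
    Paths.lift_toPath (upP V) e
  have h2 : (downF V).map (Quiver.Hom.toPath (V := UpQ V) (a := a) (b := b) (ULift.up e)) =
      e.toPath := Paths.lift_toPath (downP V) _
  exact (congrArg (downF V).map h1).trans h2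

theorem down_up (V : Type u) [Quiver.{u} V] : downF V ⋙ upF V = 𝟭 _ := by
  refine Paths.ext_functor rfl ?_
  intro a b e
  have h1 : (downF V).map e.toPath = Quiver.Hom.toPath (V := V) (a := a) (b := b) e.down :=
    Paths.lift_toPath (downP V) e
  have h2 : (upF V).map (Quiver.Hom.toPath (V := V) (a := a) (b := b) e.down) =
      e.toPath := Paths.lift_toPath (upP V) _
  exact (congrArg (upF V).map h1).trans h2

end LLPFree2


/-- **Characterization of free categories via a lifting property.**
A functor from the empty category to a small category `C` has the left lifting
property with respect to all functors that are surjective on objects and full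
if and only if `C` is a free category, i.e. isomorphic to the path category of
some quiver. -/
theorem llp_surjective_full_iff_free {C : Type u} [SmallCategory C] :
    (∀ {X Y : Type u} [SmallCategory X] [SmallCategory Y] (p : X ⥤ Y),
      Function.Surjective p.obj → p.Full →
      ∀ (G : Discrete PEmpty.{u + 1} ⥤ X) (H : C ⥤ Y),
        Functor.empty C ⋙ H = G ⋙ p →
        ∃ L : C ⥤ X, Functor.empty C ⋙ L = G ∧ L ⋙ p = H) ↔
    ∃ (Q : Type u) (_ : Quiver.{u + 1} Q),
      ∃ (F : C ⥤ Paths Q) (G : Paths Q ⥤ C), F ⋙ G = 𝟭 C ∧ G ⋙ F = 𝟭 (Paths Q) := by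
  constructor
  · intro h
    obtain ⟨L, -, hL⟩ := h (LLPFree2.pV C) LLPFree2.pV_surj LLPFree2.pV_full
      (Functor.empty _) (𝟭 C) (Functor.empty_ext' _ _)
    refine ⟨LLPFree2.UpQ (LLPFree2.Qt L), inferInstance,
      LLPFree2.GQ L hL ⋙ LLPFree2.upF _, LLPFree2.downF _ ⋙ LLPFree2.FQ L, ?_, ?_⟩
    · rw [Functor.assoc, ← Functor.assoc (LLPFree2.upF _), LLPFree2.up_down, Functor.id_comp]
      exact LLPFree2.GF L hL
    · rw [Functor.assoc, ← Functor.assoc (LLPFree2.FQ L), LLPFree2.FG L hL, Functor.id_comp]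
      exact LLPFree2.down_up _
  · rintro ⟨Q, iQ, F, G, hFG, hGF⟩
    intro X Y _ _ p hsurj hfull G' H _
    letI := iQ
    obtain ⟨L', hL'⟩ := LLPFree2.easy (Q := Q) p hsurj hfull (G ⋙ H)
    refine ⟨F ⋙ L', Functor.empty_ext' _ _, ?_⟩
    have h1 : (F ⋙ L') ⋙ p = F ⋙ (G ⋙ H) := by
      rw [Functor.assoc, hL']
    have h2 : F ⋙ (G ⋙ H) = H := by
      rw [← Functor.assoc]
      have h3 : (F ⋙ G : C ⥤ C) = 𝟭 C := hFG
      rw [h3]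
      exact Functor.id_comp H
    exact h1.trans h2
end

section
/- In any model category, if every object is fibrant, then a morphism f : X ⟶ Y between cofibrant objects is a weak equivalence if and only if it is a homotopy equivalence, i.e. there exists g : Y ⟶ X such that g ∘ f is right homotopic to id_X and f ∘ g is right homotopic to id_Y. -/
open CategoryTheory CategoryTheory.Limits

universe v u v' u'

/-- A model structure on a category `C`: three classes of morphisms (weak
equivalences, fibrations, cofibrations) satisfying the model category axioms:
two-out-of-three for weak equivalences, closure of all three classes under
retracts, the lifting axioms, and the two factorization axioms. -/
structure ModelStruct (C : Type u) [Category.{v} C] where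
  W : MorphismProperty C
  Fib : MorphismProperty C
  Cof : MorphismProperty C
  /-- two-out-of-three: composition -/
  w_comp : ∀ {X Y Z : C} (f : X ⟶ Y) (g : Y ⟶ Z), W f → W g → W (f ≫ g)
  /-- two-out-of-three: left cancellation -/
  w_cancel_left : ∀ {X Y Z : C} (f : X ⟶ Y) (g : Y ⟶ Z), W f → W (f ≫ g) → W g
  /-- two-out-of-three: right cancellation -/
  w_cancel_right : ∀ {X Y Z : C} (f : X ⟶ Y) (g : Y ⟶ Z), W g → W (f ≫ g) → W f
  /-- weak equivalences are closed under retracts -/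
  w_retract : ∀ {X Y X' Y' : C} (f : X ⟶ Y) (g : X' ⟶ Y')
    (iX : X ⟶ X') (rX : X' ⟶ X) (iY : Y ⟶ Y') (rY : Y' ⟶ Y),
    iX ≫ rX = 𝟙 X → iY ≫ rY = 𝟙 Y → iX ≫ g = f ≫ iY → g ≫ rY = rX ≫ f →
    W g → W f
  /-- fibrations are closed under retracts -/
  fib_retract : ∀ {X Y X' Y' : C} (f : X ⟶ Y) (g : X' ⟶ Y')
    (iX : X ⟶ X') (rX : X' ⟶ X) (iY : Y ⟶ Y') (rY : Y' ⟶ Y),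
    iX ≫ rX = 𝟙 X → iY ≫ rY = 𝟙 Y → iX ≫ g = f ≫ iY → g ≫ rY = rX ≫ f →
    Fib g → Fib f
  /-- cofibrations are closed under retracts -/
  cof_retract : ∀ {X Y X' Y' : C} (f : X ⟶ Y) (g : X' ⟶ Y')
    (iX : X ⟶ X') (rX : X' ⟶ X) (iY : Y ⟶ Y') (rY : Y' ⟶ Y),
    iX ≫ rX = 𝟙 X → iY ≫ rY = 𝟙 Y → iX ≫ g = f ≫ iY → g ≫ rY = rX ≫ f →
    Cof g → Cof f
  /-- trivial cofibrations lift against fibrations -/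
  lift_trivCof : ∀ {A B X Y : C} (i : A ⟶ B) (p : X ⟶ Y),
    Cof i → W i → Fib p → HasLiftingProperty i p
  /-- cofibrations lift against trivial fibrations -/
  lift_trivFib : ∀ {A B X Y : C} (i : A ⟶ B) (p : X ⟶ Y),
    Cof i → Fib p → W p → HasLiftingProperty i p
  /-- factorization as a trivial cofibration followed by a fibration -/
  fact₁ : ∀ {X Y : C} (f : X ⟶ Y), ∃ (Z : C) (i : X ⟶ Z) (p : Z ⟶ Y),
    Cof i ∧ W i ∧ Fib p ∧ i ≫ p = f
  /-- factorization as a cofibration followed by a trivial fibration -/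
  fact₂ : ∀ {X Y : C} (f : X ⟶ Y), ∃ (Z : C) (i : X ⟶ Z) (p : Z ⟶ Y),
    Cof i ∧ Fib p ∧ W p ∧ i ≫ p = f

/-- Two morphisms `u v : A ⟶ B` are *right homotopic* if there is a path object
`B → P → B × B` (a factorization of the diagonal into a weak equivalence followed
by a fibration) together with `h : A ⟶ P` projecting to `(u, v)`. -/
def ModelStruct.RightHomotopic {C : Type u} [Category.{v} C] [HasBinaryProducts C]
    (M : ModelStruct C) {A B : C} (u v : A ⟶ B) : Prop :=
  ∃ (P : C) (w : B ⟶ P) (p : P ⟶ B ⨯ B),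
    M.W w ∧ M.Fib p ∧ w ≫ p = prod.lift (𝟙 B) (𝟙 B) ∧
    ∃ h : A ⟶ P, h ≫ p = prod.lift u v

section Aux

variable {C : Type u} [Category.{v} C]

/-- Extract an explicit lift from a lifting property. -/
lemma ModelStruct.sqLift {A B E D : C} (i : A ⟶ B) (m : E ⟶ D) [HasLiftingProperty i m]
    (t : A ⟶ E) (b : B ⟶ D) (w : t ≫ m = i ≫ b) :
    ∃ l : B ⟶ E, i ≫ l = t ∧ l ≫ m = b := by
  have sq : CommSq t i m b := ⟨w⟩
  exact ⟨sq.lift, sq.fac_left, sq.fac_right⟩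

/-- Identities are weak equivalences. -/
lemma ModelStruct.w_id (M : ModelStruct C) (A : C) : M.W (𝟙 A) := by
  obtain ⟨Z, i, p, _, hiw, _, hip⟩ := M.fact₁ (𝟙 A)
  exact M.w_retract (𝟙 A) i (𝟙 A) (𝟙 A) i p (by simp) hip (by simp) (by simp [hip]) hiw

/-- Cofibrations are closed under composition. -/
lemma ModelStruct.cof_comp (M : ModelStruct C) {A B D : C} (c₁ : A ⟶ B) (c₂ : B ⟶ D)
    (h₁ : M.Cof c₁) (h₂ : M.Cof c₂) : M.Cof (c₁ ≫ c₂) := by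
  obtain ⟨E, a, b, hac, hbf, hbw, hab⟩ := M.fact₂ (c₁ ≫ c₂)
  haveI := M.lift_trivFib c₁ b h₁ hbf hbw
  haveI := M.lift_trivFib c₂ b h₂ hbf hbw
  obtain ⟨l, hl1, hl2⟩ := ModelStruct.sqLift (c₁ ≫ c₂) b a (𝟙 D) (by simp [hab])
  exact M.cof_retract (c₁ ≫ c₂) a (𝟙 A) (𝟙 A) l b (by simp) hl2
    (by simpa using hl1.symm) (by simp [hab]) hac

/-- A morphism with the right lifting property against all trivial cofibrations
is a fibration. -/
lemma ModelStruct.fib_of_rlp (M : ModelStruct C) {E D : C} (m : E ⟶ D)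
    (h : ∀ {A B : C} (c : A ⟶ B), M.Cof c → M.W c → HasLiftingProperty c m) : M.Fib m := by
  obtain ⟨E', a, b, hac, haw, hbf, hab⟩ := M.fact₁ m
  haveI := h a hac haw
  obtain ⟨l, hl1, hl2⟩ := ModelStruct.sqLift a m (𝟙 E) b (by simp [hab])
  exact M.fib_retract m b a l (𝟙 D) (𝟙 D) hl1 (by simp) (by simp [hab]) (by simp [hl2]) hbf

/-- If every object is fibrant, then every trivial cofibration lifts against
binary product projections. -/
lemma ModelStruct.hlp_fst (M : ModelStruct C) [HasTerminal C]
    (allFibrant : ∀ X : C, M.Fib (terminal.from X)) {A B : C} (c : A ⟶ B)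
    (hc : M.Cof c) (hw : M.W c) (X₁ X₂ : C) [HasBinaryProduct X₁ X₂] :
    HasLiftingProperty c (prod.fst : X₁ ⨯ X₂ ⟶ X₁) := by
  constructor
  intro t b sq
  haveI := M.lift_trivCof c (terminal.from X₂) hc hw (allFibrant X₂)
  have sq2 : CommSq (t ≫ prod.snd) c (terminal.from X₂) (terminal.from B) :=
    ⟨terminal.hom_ext _ _⟩
  exact CommSq.HasLift.mk'
    { l := prod.lift b sq2.lift
      fac_left := by
        apply Limits.prod.hom_ext
        · simp [sq.w.symm, prod.lift_fst]
        · simp [sq2.fac_left, prod.lift_snd]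
      fac_right := by simp [prod.lift_fst] }

/-- A morphism right homotopic to a weak equivalence is a weak equivalence. -/
lemma ModelStruct.w_of_rightHomotopic [HasBinaryProducts C] (M : ModelStruct C)
    {A B : C} {u v : A ⟶ B} (h : M.RightHomotopic u v) (hv : M.W v) : M.W u := by
  obtain ⟨P, w, q, hww, _, hdiag, k, hk⟩ := h
  have h0 : w ≫ (q ≫ prod.fst) = 𝟙 B := by
    rw [← Category.assoc, hdiag, prod.lift_fst]
  have h1 : w ≫ (q ≫ prod.snd) = 𝟙 B := by
    rw [← Category.assoc, hdiag, prod.lift_snd]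
  have hq0 : M.W (q ≫ prod.fst) := M.w_cancel_left w _ hww (by rw [h0]; exact M.w_id B)
  have hq1 : M.W (q ≫ prod.snd) := M.w_cancel_left w _ hww (by rw [h1]; exact M.w_id B)
  have hkv : k ≫ (q ≫ prod.snd) = v := by rw [← Category.assoc, hk, prod.lift_snd]
  have hkw : M.W k := M.w_cancel_right k _ hq1 (by rw [hkv]; exact hv)
  have hku : k ≫ (q ≫ prod.fst) = u := by rw [← Category.assoc, hk, prod.lift_fst]
  rw [← hku]
  exact M.w_comp _ _ hkw hq0

/-- Transport map between path objects covering `k : B ⟶ B'`. -/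
lemma ModelStruct.transport [HasBinaryProducts C] (M : ModelStruct C)
    {B B' P P' : C} (w : B ⟶ P) (q : P ⟶ B ⨯ B) (w' : B' ⟶ P') (q' : P' ⟶ B' ⨯ B')
    (hwc : M.Cof w) (hww : M.W w) (hq' : M.Fib q')
    (hd : w ≫ q = prod.lift (𝟙 B) (𝟙 B)) (hd' : w' ≫ q' = prod.lift (𝟙 B') (𝟙 B'))
    (k : B ⟶ B') : ∃ K : P ⟶ P', K ≫ q' = q ≫ prod.map k k := by
  haveI := M.lift_trivCof w q' hwc hww hq'
  obtain ⟨K, _, hK⟩ := ModelStruct.sqLift w q' (k ≫ w') (q ≫ prod.map k k)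
    (by rw [Category.assoc, hd', ← Category.assoc, hd]
        apply Limits.prod.hom_ext <;> simp)
  exact ⟨K, hK⟩

end Aux

/-- **Whitehead theorem for model categories in which every object is fibrant.**
If every object of a model category is fibrant, then a morphism `f : X ⟶ Y`
between cofibrant objects is a weak equivalence if and only if it is a homotopy
equivalence: there is `g : Y ⟶ X` with `g ∘ f` right homotopic to `𝟙 X` and
`f ∘ g` right homotopic to `𝟙 Y`. -/
theorem modelStruct_weq_iff_homotopyEquiv {C : Type u} [Category.{v} C]
    [HasInitial C] [HasTerminal C] [HasBinaryProducts C] (M : ModelStruct C)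
    (allFibrant : ∀ X : C, M.Fib (terminal.from X))
    {X Y : C} (hX : M.Cof (initial.to X)) (hY : M.Cof (initial.to Y)) (f : X ⟶ Y) :
    M.W f ↔ ∃ g : Y ⟶ X,
      M.RightHomotopic (f ≫ g) (𝟙 X) ∧ M.RightHomotopic (g ≫ f) (𝟙 Y) := by
  constructor
  · -- forward direction
    intro hf
    obtain ⟨Z, i, p, hic, hiw, hpf, hip⟩ := M.fact₁ f
    have hpw : M.W p := M.w_cancel_left i p hiw (by rwa [hip])
    -- Z is cofibrant
    have hZ : M.Cof (initial.to Z) := by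
      have eZ : initial.to X ≫ i = initial.to Z := initial.hom_ext _ _
      exact eZ ▸ M.cof_comp (initial.to X) i hX hic
    -- retraction r of i
    haveI := M.lift_trivCof i (terminal.from X) hic hiw (allFibrant X)
    obtain ⟨r, hri, -⟩ := ModelStruct.sqLift i (terminal.from X) (𝟙 X) (terminal.from Z)
      (terminal.hom_ext _ _)
    -- section s of p
    haveI := M.lift_trivFib (initial.to Y) p hY hpf hpw
    obtain ⟨s, -, hsp⟩ := ModelStruct.sqLift (initial.to Y) p (initial.to Z) (𝟙 Y)
      (initial.hom_ext _ _)
    have hsw : M.W s := M.w_cancel_right s p hpw (by rw [hsp]; exact M.w_id Y)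
    -- factor s as trivial cofibration j followed by (trivial) fibration t
    obtain ⟨V, j, t, hjc, hjw, htf, hjt⟩ := M.fact₁ s
    have htw : M.W t := M.w_cancel_left j t hjw (by rwa [hjt])
    -- section σ of t
    haveI := M.lift_trivFib (initial.to Z) t hZ htf htw
    obtain ⟨σ, -, hσt⟩ := ModelStruct.sqLift (initial.to Z) t (initial.to V) (𝟙 Z)
      (initial.hom_ext _ _)
    -- good path objects
    obtain ⟨PV, wV, qV, hwVc, hwVw, hqVf, hdV⟩ := M.fact₁ (prod.lift (𝟙 V) (𝟙 V))
    obtain ⟨PZ, wZ, qZ, hwZc, hwZw, hqZf, hdZ⟩ := M.fact₁ (prod.lift (𝟙 Z) (𝟙 Z))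
    obtain ⟨PX, wX, qX, hwXc, hwXw, hqXf, hdX⟩ := M.fact₁ (prod.lift (𝟙 X) (𝟙 X))
    obtain ⟨PY, wY, qY, hwYc, hwYw, hqYf, hdY⟩ := M.fact₁ (prod.lift (𝟙 Y) (𝟙 Y))
    refine ⟨s ≫ r, ?_, ?_⟩
    · -- f ≫ (s ≫ r) right homotopic to 𝟙 X
      -- homotopy (t ≫ p) ≫ j ~ 𝟙 V
      haveI := M.lift_trivCof j qV hjc hjw hqVf
      obtain ⟨HV, -, hHV⟩ := ModelStruct.sqLift j qV (j ≫ wV)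
        (prod.lift ((t ≫ p) ≫ j) (𝟙 V))
        (by rw [Category.assoc, hdV]
            apply Limits.prod.hom_ext
            · simp only [Category.assoc, prod.comp_lift, prod.lift_fst, Category.comp_id]
              rw [← Category.assoc, ← Category.assoc, hjt, hsp, Category.id_comp]
            · simp [prod.lift_snd])
      obtain ⟨Kt, hKt⟩ := M.transport wV qV wZ qZ hwVc hwVw hqZf hdV hdZ t
      obtain ⟨Kr, hKr⟩ := M.transport wZ qZ wX qX hwZc hwZw hqXf hdZ hdX r
      refine ⟨PX, wX, qX, hwXw, hqXf, hdX, i ≫ (σ ≫ HV ≫ Kt) ≫ Kr, ?_⟩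
      apply Limits.prod.hom_ext
      · simp only [Category.assoc, prod.lift_fst]
        rw [reassoc_of% hKr]
        simp only [prod.map_fst, prod.map_fst_assoc]
        rw [reassoc_of% hKt]
        simp only [prod.map_fst, prod.map_fst_assoc]
        rw [reassoc_of% hHV]
        simp only [prod.lift_fst_assoc, Category.assoc]
        rw [reassoc_of% hjt, reassoc_of% hσt, reassoc_of% hip]
      · simp only [Category.assoc, prod.lift_snd, Category.comp_id]
        rw [reassoc_of% hKr]
        simp only [prod.map_snd, prod.map_snd_assoc]
        rw [reassoc_of% hKt]
        simp only [prod.map_snd, prod.map_snd_assoc]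
        rw [reassoc_of% hHV]
        simp only [prod.lift_snd_assoc, Category.id_comp]
        rw [reassoc_of% hσt, hri]
    · -- (s ≫ r) ≫ f right homotopic to 𝟙 Y
      haveI := M.lift_trivCof i qZ hic hiw hqZf
      obtain ⟨H₁, -, hH₁⟩ := ModelStruct.sqLift i qZ (i ≫ wZ) (prod.lift (r ≫ i) (𝟙 Z))
        (by rw [Category.assoc, hdZ]
            apply Limits.prod.hom_ext
            · simp only [Category.assoc, prod.comp_lift, prod.lift_fst, Category.comp_id]
              rw [← Category.assoc, hri, Category.id_comp]
            · simp [prod.lift_snd])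
      obtain ⟨Kp, hKp⟩ := M.transport wZ qZ wY qY hwZc hwZw hqYf hdZ hdY p
      refine ⟨PY, wY, qY, hwYw, hqYf, hdY, s ≫ H₁ ≫ Kp, ?_⟩
      apply Limits.prod.hom_ext
      · simp only [Category.assoc, prod.lift_fst]
        rw [reassoc_of% hKp]
        simp only [prod.map_fst, prod.map_fst_assoc]
        rw [reassoc_of% hH₁]
        simp only [prod.lift_fst_assoc, Category.assoc]
        rw [hip]
      · simp only [Category.assoc, prod.lift_snd, Category.comp_id]
        rw [reassoc_of% hKp]
        simp only [prod.map_snd, prod.map_snd_assoc]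
        rw [reassoc_of% hH₁]
        simp only [prod.lift_snd_assoc, Category.id_comp]
        exact hsp
  · -- backward direction
    rintro ⟨g, hfg, hgf⟩
    obtain ⟨Z, i, p, hic, hpf, hpw, hip⟩ := M.fact₂ f
    -- section s of p
    haveI := M.lift_trivFib (initial.to Y) p hY hpf hpw
    obtain ⟨s, -, hsp⟩ := ModelStruct.sqLift (initial.to Y) p (initial.to Z) (𝟙 Y)
      (initial.hom_ext _ _)
    have hsw : M.W s := M.w_cancel_right s p hpw (by rw [hsp]; exact M.w_id Y)
    -- g ≫ f and hence g ≫ i are weak equivalences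
    have hWgf : M.W (g ≫ f) := M.w_of_rightHomotopic hgf (M.w_id Y)
    have hWgi : M.W (g ≫ i) := M.w_cancel_right (g ≫ i) p hpw
      (by rw [Category.assoc, hip]; exact hWgf)
    -- path object witnessing f ≫ g ~ 𝟙 X
    obtain ⟨P₁, w₁, q₁, hw₁, hq₁, hd₁, h₁, hh₁⟩ := hfg
    -- make it good: factor w₁
    obtain ⟨Q, α, β, hαc, hαw, hβf, hαβ⟩ := M.fact₁ w₁
    have hβw : M.W β := M.w_cancel_left α β hαw (by rwa [hαβ])
    haveI := M.lift_trivFib (initial.to X) β hX hβf hβw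
    obtain ⟨h₂, -, hh₂⟩ := ModelStruct.sqLift (initial.to X) β (initial.to Q) h₁
      (initial.hom_ext _ _)
    -- q₁ ≫ prod.fst is a trivial fibration
    have hq10f : M.Fib (q₁ ≫ prod.fst) := M.fib_of_rlp _ (fun c hc hw => by
      haveI := M.lift_trivCof c q₁ hc hw hq₁
      haveI := M.hlp_fst allFibrant c hc hw X X
      infer_instance)
    have hq10w : M.W (q₁ ≫ prod.fst) := M.w_cancel_left w₁ _ hw₁
      (by rw [← Category.assoc, hd₁, prod.lift_fst]; exact M.w_id X)
    -- extension: produce exact retraction r' of i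
    haveI := M.lift_trivFib i β hic hβf hβw
    haveI := M.lift_trivFib i (q₁ ≫ prod.fst) hic hq10f hq10w
    haveI : HasLiftingProperty i (β ≫ (q₁ ≫ prod.fst)) := inferInstance
    obtain ⟨R, hiR, hR0⟩ := ModelStruct.sqLift i (β ≫ (q₁ ≫ prod.fst)) h₂ (p ≫ g)
      (by rw [reassoc_of% hh₂, reassoc_of% hh₁, prod.lift_fst, reassoc_of% hip])
    set r' : Z ⟶ X := R ≫ (β ≫ (q₁ ≫ prod.snd)) with hr'def
    have hir' : i ≫ r' = 𝟙 X := by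
      rw [hr'def, reassoc_of% hiR, reassoc_of% hh₂, reassoc_of% hh₁, prod.lift_snd]
    -- good path object of Z and transport along i
    obtain ⟨PZ, wZ, qZ, hwZc, hwZw, hqZf, hdZ⟩ := M.fact₁ (prod.lift (𝟙 Z) (𝟙 Z))
    have hdQ : α ≫ (β ≫ q₁) = prod.lift (𝟙 X) (𝟙 X) := by
      rw [← Category.assoc, hαβ, hd₁]
    obtain ⟨Ki, hKi⟩ := M.transport α (β ≫ q₁) wZ qZ hαc hαw hqZf hdQ hdZ i
    have hRq : R ≫ (β ≫ q₁) = prod.lift (p ≫ g) r' := by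
      apply Limits.prod.hom_ext
      · rw [Category.assoc, prod.lift_fst, ← hR0]
        simp [Category.assoc]
      · rw [Category.assoc, prod.lift_snd, hr'def]
        simp [Category.assoc]
    have hcomp : (R ≫ Ki) ≫ qZ = prod.lift ((p ≫ g) ≫ i) (r' ≫ i) := by
      rw [Category.assoc, hKi, ← Category.assoc, hRq]
      apply Limits.prod.hom_ext <;> simp
    have hq0Z : M.W (qZ ≫ prod.fst) := M.w_cancel_left wZ _ hwZw
      (by rw [← Category.assoc, hdZ, prod.lift_fst]; exact M.w_id Z)
    have hq1Z : M.W (qZ ≫ prod.snd) := M.w_cancel_left wZ _ hwZw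
      (by rw [← Category.assoc, hdZ, prod.lift_snd]; exact M.w_id Z)
    have hWpgi : M.W ((p ≫ g) ≫ i) := by
      rw [Category.assoc]
      exact M.w_comp p (g ≫ i) hpw hWgi
    have hWRKi : M.W (R ≫ Ki) := M.w_cancel_right _ (qZ ≫ prod.fst) hq0Z
      (by rw [← Category.assoc, hcomp]
          have : prod.lift ((p ≫ g) ≫ i) (r' ≫ i) ≫ prod.fst = (p ≫ g) ≫ i :=
            prod.lift_fst _ _
          rw [this]; exact hWpgi)
    have hWr'i : M.W (r' ≫ i) := by
      have e : (R ≫ Ki) ≫ (qZ ≫ prod.snd) = r' ≫ i := by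
        rw [← Category.assoc, hcomp, prod.lift_snd]
      rw [← e]
      exact M.w_comp _ _ hWRKi hq1Z
    -- f is a retract of the weak equivalence (r' ≫ i) ≫ (p ≫ s)
    have hWe : M.W ((r' ≫ i) ≫ (p ≫ s)) :=
      M.w_comp _ _ hWr'i (M.w_comp p s hpw hsw)
    refine M.w_retract f ((r' ≫ i) ≫ (p ≫ s)) i r' s p hir' hsp ?_ ?_ hWe
    · simp only [Category.assoc]
      rw [reassoc_of% hir', reassoc_of% hip]
    · simp only [Category.assoc]
      rw [hsp]
      simp only [Category.comp_id]
      rw [← hip]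
end

section
/- In a (pseudo) double category, a square α with identity vertical boundaries and horizontally invertible horizontal boundaries is weakly horizontally invertible if and only if it is vertically invertible. In particular, for a square α : (e_A, a ⇒ b, e_B) whose horizontal source a and target b are horizontal equivalences, α is an equivalence in the 2-category of vertical morphisms and squares precisely when α admits a vertical inverse. -/
universe u

/-- A (strict) double category, given explicitly: objects, horizontal morphisms,
vertical morphisms, and squares, with strictly associative and unital horizontal
and vertical compositions of morphisms and of squares, satisfying the
interchange law and the compatibilities between identity squares.
A square `α : Sq a b u v` has horizontal source `a` (top), horizontal target `b`
(bottom), vertical source `u` (left) and vertical target `v` (right). -/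
structure DoubleCat : Type (u + 1) where
  Obj : Type u
  Hor : Obj → Obj → Type u
  Ver : Obj → Obj → Type u
  Sq : ∀ {A B A' B' : Obj}, Hor A B → Hor A' B' → Ver A A' → Ver B B' → Type u
  hId : ∀ A : Obj, Hor A A
  hComp : ∀ {A B C : Obj}, Hor A B → Hor B C → Hor A C
  hId_comp : ∀ {A B : Obj} (a : Hor A B), hComp (hId A) a = a
  hComp_id : ∀ {A B : Obj} (a : Hor A B), hComp a (hId B) = a
  hComp_assoc : ∀ {A B C D : Obj} (a : Hor A B) (b : Hor B C) (c : Hor C D),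
    hComp (hComp a b) c = hComp a (hComp b c)
  vId : ∀ A : Obj, Ver A A
  vComp : ∀ {A B C : Obj}, Ver A B → Ver B C → Ver A C
  vId_comp : ∀ {A B : Obj} (u : Ver A B), vComp (vId A) u = u
  vComp_id : ∀ {A B : Obj} (u : Ver A B), vComp u (vId B) = u
  vComp_assoc : ∀ {A B C D : Obj} (u : Ver A B) (v : Ver B C) (w : Ver C D),
    vComp (vComp u v) w = vComp u (vComp v w)
  /-- the vertical identity square `e_a` on a horizontal morphism -/
  idSqV : ∀ {A B : Obj} (a : Hor A B), Sq a a (vId A) (vId B)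
  /-- the horizontal identity square `id_u` on a vertical morphism -/
  idSqH : ∀ {A A' : Obj} (u : Ver A A'), Sq (hId A) (hId A') u u
  /-- horizontal composition of squares -/
  compSqH : ∀ {A B C A' B' C' : Obj} {a : Hor A B} {b : Hor B C} {a' : Hor A' B'}
    {b' : Hor B' C'} {u : Ver A A'} {v : Ver B B'} {w : Ver C C'},
    Sq a a' u v → Sq b b' v w → Sq (hComp a b) (hComp a' b') u w
  /-- vertical composition of squares -/
  compSqV : ∀ {A B A' B' A'' B'' : Obj} {a : Hor A B} {a' : Hor A' B'}
    {a'' : Hor A'' B''} {u : Ver A A'} {v : Ver B B'} {u' : Ver A' A''}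
    {v' : Ver B' B''},
    Sq a a' u v → Sq a' a'' u' v' → Sq a a'' (vComp u u') (vComp v v')
  compSqV_id : ∀ {A B A' B' : Obj} {a : Hor A B} {a' : Hor A' B'} {u : Ver A A'}
    {v : Ver B B'} (α : Sq a a' u v), HEq (compSqV α (idSqV a')) α
  id_compSqV : ∀ {A B A' B' : Obj} {a : Hor A B} {a' : Hor A' B'} {u : Ver A A'}
    {v : Ver B B'} (α : Sq a a' u v), HEq (compSqV (idSqV a) α) α
  compSqV_assoc : ∀ {A B A' B' A'' B'' A''' B''' : Obj} {a : Hor A B}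
    {a' : Hor A' B'} {a'' : Hor A'' B''} {a''' : Hor A''' B'''}
    {u : Ver A A'} {v : Ver B B'} {u' : Ver A' A''} {v' : Ver B' B''}
    {u'' : Ver A'' A'''} {v'' : Ver B'' B'''}
    (α : Sq a a' u v) (β : Sq a' a'' u' v') (γ : Sq a'' a''' u'' v''),
    HEq (compSqV (compSqV α β) γ) (compSqV α (compSqV β γ))
  compSqH_id : ∀ {A B A' B' : Obj} {a : Hor A B} {a' : Hor A' B'} {u : Ver A A'}
    {v : Ver B B'} (α : Sq a a' u v), HEq (compSqH α (idSqH v)) α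
  id_compSqH : ∀ {A B A' B' : Obj} {a : Hor A B} {a' : Hor A' B'} {u : Ver A A'}
    {v : Ver B B'} (α : Sq a a' u v), HEq (compSqH (idSqH u) α) α
  compSqH_assoc : ∀ {A B C D A' B' C' D' : Obj} {a : Hor A B} {b : Hor B C}
    {c : Hor C D} {a' : Hor A' B'} {b' : Hor B' C'} {c' : Hor C' D'}
    {u : Ver A A'} {v : Ver B B'} {w : Ver C C'} {x : Ver D D'}
    (α : Sq a a' u v) (β : Sq b b' v w) (γ : Sq c c' w x),
    HEq (compSqH (compSqH α β) γ) (compSqH α (compSqH β γ))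
  /-- the interchange law -/
  interchange : ∀ {A B C A' B' C' A'' B'' C'' : Obj}
    {a : Hor A B} {b : Hor B C} {a' : Hor A' B'} {b' : Hor B' C'}
    {a'' : Hor A'' B''} {b'' : Hor B'' C''}
    {u : Ver A A'} {v : Ver B B'} {w : Ver C C'}
    {u' : Ver A' A''} {v' : Ver B' B''} {w' : Ver C' C''}
    (α : Sq a a' u v) (β : Sq b b' v w) (γ : Sq a' a'' u' v') (δ : Sq b' b'' v' w'),
    compSqV (compSqH α β) (compSqH γ δ) = compSqH (compSqV α γ) (compSqV β δ)
  idSqV_hComp : ∀ {A B C : Obj} (a : Hor A B) (b : Hor B C),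
    compSqH (idSqV a) (idSqV b) = idSqV (hComp a b)
  idSqH_vComp : ∀ {A A' A'' : Obj} (u : Ver A A') (u' : Ver A' A''),
    compSqV (idSqH u) (idSqH u') = idSqH (vComp u u')
  idSq_coherence : ∀ A : Obj, idSqV (hId A) = idSqH (vId A)

namespace DoubleCat

variable {D : DoubleCat.{u}}

/-- Transport of a square along equalities of its four boundaries. -/
def sqCast {A B A' B' : D.Obj} {a₁ a₂ : D.Hor A B} {b₁ b₂ : D.Hor A' B'}
    {u₁ u₂ : D.Ver A A'} {v₁ v₂ : D.Ver B B'}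
    (ha : a₁ = a₂) (hb : b₁ = b₂) (hu : u₁ = u₂) (hv : v₁ = v₂)
    (α : D.Sq a₁ b₁ u₁ v₁) : D.Sq a₂ b₂ u₂ v₂ :=
  ha ▸ hb ▸ hu ▸ hv ▸ α

theorem sqCast_heq {A B A' B' : D.Obj} {a₁ a₂ : D.Hor A B} {b₁ b₂ : D.Hor A' B'}
    {u₁ u₂ : D.Ver A A'} {v₁ v₂ : D.Ver B B'}
    (ha : a₁ = a₂) (hb : b₁ = b₂) (hu : u₁ = u₂) (hv : v₁ = v₂)
    (α : D.Sq a₁ b₁ u₁ v₁) : HEq (sqCast ha hb hu hv α) α := by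
  subst ha; subst hb; subst hu; subst hv; rfl

/-- A square with identity vertical boundaries is *vertically invertible* if it
admits an inverse for the vertical composition of squares. -/
def VerticallyInvertible {A B : D.Obj} {a b : D.Hor A B}
    (α : D.Sq a b (D.vId A) (D.vId B)) : Prop :=
  ∃ β : D.Sq b a (D.vId A) (D.vId B),
    HEq (D.compSqV α β) (D.idSqV a) ∧ HEq (D.compSqV β α) (D.idSqV b)

/-- A horizontal morphism is a *horizontal equivalence* if it is an equivalence
in the underlying horizontal 2-category, i.e. it admits a pseudo-inverse up to
vertically invertible squares. -/
def IsHorEquiv {A B : D.Obj} (a : D.Hor A B) : Prop :=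
  ∃ (a' : D.Hor B A) (η : D.Sq (D.hId A) (D.hComp a a') (D.vId A) (D.vId A))
    (ε : D.Sq (D.hComp a' a) (D.hId B) (D.vId B) (D.vId B)),
    VerticallyInvertible η ∧ VerticallyInvertible ε

/-- Horizontal adjoint equivalence data on a horizontal morphism `a : A ⟶ B`:
a pseudo-inverse `inv`, a vertically invertible unit `η : id_A ≅ inv ∘ a` and a
vertically invertible counit `ε : a ∘ inv ≅ id_B` (written diagrammatically:
`η : Sq (hId A) (a ⬝ inv)` and `ε : Sq (inv ⬝ a) (hId B)`), satisfying the two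
triangle identities. -/
structure HorAdjEquiv {A B : D.Obj} (a : D.Hor A B) : Type u where
  inv : D.Hor B A
  η : D.Sq (D.hId A) (D.hComp a inv) (D.vId A) (D.vId A)
  ε : D.Sq (D.hComp inv a) (D.hId B) (D.vId B) (D.vId B)
  η_invertible : VerticallyInvertible η
  ε_invertible : VerticallyInvertible ε
  triangle₁ : HEq
    (D.compSqV (D.compSqH η (D.idSqV a))
      (sqCast (D.hComp_assoc a inv a).symm rfl rfl rfl
        (D.compSqH (D.idSqV a) ε)))
    (D.idSqV a)
  triangle₂ : HEq
    (D.compSqV (D.compSqH (D.idSqV inv) η)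
      (sqCast (D.hComp_assoc inv a inv) rfl rfl rfl
        (D.compSqH ε (D.idSqV inv))))
    (D.idSqV inv)

/-- The two pasting equations expressing that `β` is a *weak inverse* of the
square `α : Sq a b u v` with respect to the given (co)unit squares
`η_a : id ≅ a' ∘ a`, `η_b : id ≅ b' ∘ b`, `ε_a : a ∘ a' ≅ id`, `ε_b : b ∘ b' ≅ id`
for its horizontal boundaries: `(α ∣ β)` pasted under `η_a` agrees with `η_b`
pasted under `id_u`, and `ε_a` pasted over `id_v` agrees with `(β ∣ α)` pasted
over `ε_b`. -/
def IsWeakInverseWith {A B A' B' : D.Obj} {a : D.Hor A B} {b : D.Hor A' B'}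
    {u : D.Ver A A'} {v : D.Ver B B'} (α : D.Sq a b u v)
    {a' : D.Hor B A} {b' : D.Hor B' A'}
    (η_a : D.Sq (D.hId A) (D.hComp a a') (D.vId A) (D.vId A))
    (η_b : D.Sq (D.hId A') (D.hComp b b') (D.vId A') (D.vId A'))
    (ε_a : D.Sq (D.hComp a' a) (D.hId B) (D.vId B) (D.vId B))
    (ε_b : D.Sq (D.hComp b' b) (D.hId B') (D.vId B') (D.vId B'))
    (β : D.Sq a' b' v u) : Prop :=
  HEq (D.compSqV η_a (D.compSqH α β)) (D.compSqV (D.idSqH u) η_b) ∧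
  HEq (D.compSqV ε_a (D.idSqH v)) (D.compSqV (D.compSqH β α) ε_b)

/-- A square is *weakly horizontally invertible* if it is an equivalence in the
2-category of vertical morphisms and squares: there are a square `β` in the
opposite horizontal direction and vertically invertible unit and counit squares
for the horizontal boundaries making `β` a weak inverse of `α`. -/
def WeaklyHorInvertible {A B A' B' : D.Obj} {a : D.Hor A B} {b : D.Hor A' B'}
    {u : D.Ver A A'} {v : D.Ver B B'} (α : D.Sq a b u v) : Prop :=
  ∃ (a' : D.Hor B A) (b' : D.Hor B' A')
    (η_a : D.Sq (D.hId A) (D.hComp a a') (D.vId A) (D.vId A))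
    (η_b : D.Sq (D.hId A') (D.hComp b b') (D.vId A') (D.vId A'))
    (ε_a : D.Sq (D.hComp a' a) (D.hId B) (D.vId B) (D.vId B))
    (ε_b : D.Sq (D.hComp b' b) (D.hId B') (D.vId B') (D.vId B'))
    (β : D.Sq a' b' v u),
    VerticallyInvertible η_a ∧ VerticallyInvertible η_b ∧
    VerticallyInvertible ε_a ∧ VerticallyInvertible ε_b ∧
    IsWeakInverseWith α η_a η_b ε_a ε_b β

end DoubleCat

namespace DoubleCat

section Aux

variable {D : DoubleCat.{u}}

theorem compSqV_congr {A B A' B' A'' B'' : D.Obj}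
    {a₁ a₂ : D.Hor A B} {a'₁ a'₂ : D.Hor A' B'} {a''₁ a''₂ : D.Hor A'' B''}
    {u₁ u₂ : D.Ver A A'} {v₁ v₂ : D.Ver B B'} {u'₁ u'₂ : D.Ver A' A''}
    {v'₁ v'₂ : D.Ver B' B''}
    (ea : a₁ = a₂) (ea' : a'₁ = a'₂) (ea'' : a''₁ = a''₂)
    (eu : u₁ = u₂) (ev : v₁ = v₂) (eu' : u'₁ = u'₂) (ev' : v'₁ = v'₂)
    {α₁ : D.Sq a₁ a'₁ u₁ v₁} {α₂ : D.Sq a₂ a'₂ u₂ v₂}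
    {β₁ : D.Sq a'₁ a''₁ u'₁ v'₁} {β₂ : D.Sq a'₂ a''₂ u'₂ v'₂}
    (hα : HEq α₁ α₂) (hβ : HEq β₁ β₂) :
    HEq (D.compSqV α₁ β₁) (D.compSqV α₂ β₂) := by
  subst ea; subst ea'; subst ea''; subst eu; subst ev; subst eu'; subst ev'
  rw [eq_of_heq hα, eq_of_heq hβ]

theorem compSqH_congr {A B C A' B' C' : D.Obj}
    {a₁ a₂ : D.Hor A B} {b₁ b₂ : D.Hor B C} {a'₁ a'₂ : D.Hor A' B'}
    {b'₁ b'₂ : D.Hor B' C'}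
    {u₁ u₂ : D.Ver A A'} {v₁ v₂ : D.Ver B B'} {w₁ w₂ : D.Ver C C'}
    (ea : a₁ = a₂) (eb : b₁ = b₂) (ea' : a'₁ = a'₂) (eb' : b'₁ = b'₂)
    (eu : u₁ = u₂) (ev : v₁ = v₂) (ew : w₁ = w₂)
    {α₁ : D.Sq a₁ a'₁ u₁ v₁} {α₂ : D.Sq a₂ a'₂ u₂ v₂}
    {β₁ : D.Sq b₁ b'₁ v₁ w₁} {β₂ : D.Sq b₂ b'₂ v₂ w₂}
    (hα : HEq α₁ α₂) (hβ : HEq β₁ β₂) :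
    HEq (D.compSqH α₁ β₁) (D.compSqH α₂ β₂) := by
  subst ea; subst eb; subst ea'; subst eb'; subst eu; subst ev; subst ew
  rw [eq_of_heq hα, eq_of_heq hβ]

/-- Composition of globular squares (vertical composition, with the
vertical identities renormalised). -/
def gcomp {A B : D.Obj} {a b c : D.Hor A B} (α : D.Sq a b (D.vId A) (D.vId B))
    (β : D.Sq b c (D.vId A) (D.vId B)) : D.Sq a c (D.vId A) (D.vId B) :=
  sqCast rfl rfl (D.vId_comp _) (D.vId_comp _) (D.compSqV α β)

theorem gcomp_heq {A B : D.Obj} {a b c : D.Hor A B}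
    {α : D.Sq a b (D.vId A) (D.vId B)} {β : D.Sq b c (D.vId A) (D.vId B)} :
    HEq (gcomp α β) (D.compSqV α β) :=
  sqCast_heq _ _ _ _ _

theorem gcomp_congr {A B : D.Obj} {a₁ a₂ b₁ b₂ c₁ c₂ : D.Hor A B}
    (ea : a₁ = a₂) (eb : b₁ = b₂) (ec : c₁ = c₂)
    {α₁ : D.Sq a₁ b₁ (D.vId A) (D.vId B)} {α₂ : D.Sq a₂ b₂ (D.vId A) (D.vId B)}
    {β₁ : D.Sq b₁ c₁ (D.vId A) (D.vId B)} {β₂ : D.Sq b₂ c₂ (D.vId A) (D.vId B)}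
    (hα : HEq α₁ α₂) (hβ : HEq β₁ β₂) :
    HEq (gcomp α₁ β₁) (gcomp α₂ β₂) :=
  gcomp_heq.trans ((compSqV_congr ea eb ec rfl rfl rfl rfl hα hβ).trans gcomp_heq.symm)

theorem gcomp_id {A B : D.Obj} {a b : D.Hor A B} (α : D.Sq a b (D.vId A) (D.vId B)) :
    gcomp α (D.idSqV b) = α :=
  eq_of_heq (gcomp_heq.trans (D.compSqV_id α))

theorem id_gcomp {A B : D.Obj} {a b : D.Hor A B} (α : D.Sq a b (D.vId A) (D.vId B)) :
    gcomp (D.idSqV a) α = α :=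
  eq_of_heq (gcomp_heq.trans (D.id_compSqV α))

theorem gcomp_assoc {A B : D.Obj} {a b c d : D.Hor A B}
    (α : D.Sq a b (D.vId A) (D.vId B)) (β : D.Sq b c (D.vId A) (D.vId B))
    (γ : D.Sq c d (D.vId A) (D.vId B)) :
    gcomp (gcomp α β) γ = gcomp α (gcomp β γ) := by
  refine eq_of_heq (gcomp_heq.trans (HEq.trans ?_ gcomp_heq.symm))
  refine HEq.trans (compSqV_congr rfl rfl rfl (D.vId_comp _).symm (D.vId_comp _).symm
    rfl rfl gcomp_heq HEq.rfl) ?_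
  refine (D.compSqV_assoc α β γ).trans ?_
  exact compSqV_congr rfl rfl rfl rfl rfl (D.vId_comp _) (D.vId_comp _) HEq.rfl
    gcomp_heq.symm

theorem gcomp_hcomp {A B C : D.Obj} {a₁ a₂ a₃ : D.Hor A B} {b₁ b₂ b₃ : D.Hor B C}
    (α : D.Sq a₁ a₂ (D.vId A) (D.vId B)) (β : D.Sq b₁ b₂ (D.vId B) (D.vId C))
    (γ : D.Sq a₂ a₃ (D.vId A) (D.vId B)) (δ : D.Sq b₂ b₃ (D.vId B) (D.vId C)) :
    gcomp (D.compSqH α β) (D.compSqH γ δ) = D.compSqH (gcomp α γ) (gcomp β δ) := by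
  refine eq_of_heq (gcomp_heq.trans ?_)
  refine (heq_of_eq (D.interchange α β γ δ)).trans ?_
  exact compSqH_congr rfl rfl rfl rfl (D.vId_comp _) (D.vId_comp _) (D.vId_comp _)
    gcomp_heq.symm gcomp_heq.symm

theorem id_hcomp_heq {A B : D.Obj} {a b : D.Hor A B} (α : D.Sq a b (D.vId A) (D.vId B)) :
    HEq (D.compSqH (D.idSqV (D.hId A)) α) α := by
  rw [D.idSq_coherence]; exact D.id_compSqH α

theorem hcomp_id_heq {A B : D.Obj} {a b : D.Hor A B} (α : D.Sq a b (D.vId A) (D.vId B)) :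
    HEq (D.compSqH α (D.idSqV (D.hId B))) α := by
  rw [D.idSq_coherence]; exact D.compSqH_id α

theorem lwhisker_gcomp {A B C : D.Obj} (x : D.Hor A B) {b₁ b₂ b₃ : D.Hor B C}
    (α : D.Sq b₁ b₂ (D.vId B) (D.vId C)) (β : D.Sq b₂ b₃ (D.vId B) (D.vId C)) :
    gcomp (D.compSqH (D.idSqV x) α) (D.compSqH (D.idSqV x) β)
      = D.compSqH (D.idSqV x) (gcomp α β) := by
  rw [gcomp_hcomp, gcomp_id]

theorem vinv_iff {A B : D.Obj} {a b : D.Hor A B} (α : D.Sq a b (D.vId A) (D.vId B)) :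
    VerticallyInvertible α ↔
      ∃ β, gcomp α β = D.idSqV a ∧ gcomp β α = D.idSqV b := by
  constructor
  · rintro ⟨β, h1, h2⟩
    exact ⟨β, eq_of_heq (gcomp_heq.trans h1), eq_of_heq (gcomp_heq.trans h2)⟩
  · rintro ⟨β, h1, h2⟩
    exact ⟨β, gcomp_heq.symm.trans (heq_of_eq h1), gcomp_heq.symm.trans (heq_of_eq h2)⟩

theorem vinv_id {A B : D.Obj} (a : D.Hor A B) : VerticallyInvertible (D.idSqV a) :=
  (vinv_iff _).2 ⟨D.idSqV a, gcomp_id _, gcomp_id _⟩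

theorem vinv_gcomp {A B : D.Obj} {a b c : D.Hor A B}
    {α : D.Sq a b (D.vId A) (D.vId B)} {β : D.Sq b c (D.vId A) (D.vId B)}
    (hα : VerticallyInvertible α) (hβ : VerticallyInvertible β) :
    VerticallyInvertible (gcomp α β) := by
  obtain ⟨α', hα1, hα2⟩ := (vinv_iff _).1 hα
  obtain ⟨β', hβ1, hβ2⟩ := (vinv_iff _).1 hβ
  refine (vinv_iff _).2 ⟨gcomp β' α', ?_, ?_⟩
  · rw [gcomp_assoc, ← gcomp_assoc β, hβ1, id_gcomp, hα1]
  · rw [gcomp_assoc, ← gcomp_assoc α', hα2, id_gcomp, hβ2]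

theorem vinv_hcomp {A B C : D.Obj} {a₁ a₂ : D.Hor A B} {b₁ b₂ : D.Hor B C}
    {α : D.Sq a₁ a₂ (D.vId A) (D.vId B)} {β : D.Sq b₁ b₂ (D.vId B) (D.vId C)}
    (hα : VerticallyInvertible α) (hβ : VerticallyInvertible β) :
    VerticallyInvertible (D.compSqH α β) := by
  obtain ⟨α', hα1, hα2⟩ := (vinv_iff _).1 hα
  obtain ⟨β', hβ1, hβ2⟩ := (vinv_iff _).1 hβ
  refine (vinv_iff _).2 ⟨D.compSqH α' β', ?_, ?_⟩
  · rw [gcomp_hcomp, hα1, hβ1, D.idSqV_hComp]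
  · rw [gcomp_hcomp, hα2, hβ2, D.idSqV_hComp]

theorem vinv_transfer {A B : D.Obj} {a₁ a₂ b₁ b₂ : D.Hor A B}
    (ea : a₁ = a₂) (eb : b₁ = b₂)
    {α : D.Sq a₁ b₁ (D.vId A) (D.vId B)} {β : D.Sq a₂ b₂ (D.vId A) (D.vId B)}
    (h : HEq α β) (hα : VerticallyInvertible α) : VerticallyInvertible β := by
  subst ea; subst eb; rwa [← eq_of_heq h]

theorem vinv_of_comp {A B : D.Obj} {a b : D.Hor A B}
    {α : D.Sq a b (D.vId A) (D.vId B)} {γ : D.Sq b a (D.vId A) (D.vId B)}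
    (h1 : VerticallyInvertible (gcomp α γ)) (h2 : VerticallyInvertible (gcomp γ α)) :
    VerticallyInvertible α := by
  obtain ⟨i, hi1, hi2⟩ := (vinv_iff _).1 h1
  obtain ⟨j, hj1, hj2⟩ := (vinv_iff _).1 h2
  have hR : gcomp α (gcomp γ i) = D.idSqV a := by rw [← gcomp_assoc, hi1]
  have hL : gcomp (gcomp j γ) α = D.idSqV b := by rw [gcomp_assoc, hj2]
  have hRL : gcomp j γ = gcomp γ i := by
    have h := congrArg (fun x => gcomp x (gcomp γ i)) hL
    rw [id_gcomp, gcomp_assoc, hR, gcomp_id] at h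
    exact h
  exact (vinv_iff _).2 ⟨gcomp γ i, hR, by rw [← hRL]; exact hL⟩

theorem keyA {A B : D.Obj} {a b : D.Hor A B} {a' b' : D.Hor B A}
    (ηa : D.Sq (D.hId A) (D.hComp a a') (D.vId A) (D.vId A))
    (εb : D.Sq (D.hComp b' b) (D.hId B) (D.vId B) (D.vId B))
    (α : D.Sq a b (D.vId A) (D.vId B)) (β : D.Sq a' b' (D.vId B) (D.vId A)) :
    HEq
      (gcomp α (sqCast (D.hId_comp b) (D.hComp_id a) rfl rfl
        (gcomp (D.compSqH (gcomp ηa (D.compSqH (D.idSqV a) β)) (D.idSqV b))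
          (sqCast (D.hComp_assoc a b' b).symm rfl rfl rfl (D.compSqH (D.idSqV a) εb)))))
      (gcomp (D.compSqH ηa (D.idSqV a))
        (sqCast (D.hComp_assoc a a' a).symm rfl rfl rfl
          (D.compSqH (D.idSqV a) (gcomp (D.compSqH β α) εb)))) := by
  have e1 : HEq (D.compSqH (D.idSqV (D.hComp a b')) α)
      (D.compSqH (D.idSqV a) (D.compSqH (D.idSqV b') α)) := by
    rw [← D.idSqV_hComp]; exact D.compSqH_assoc _ _ _
  have i1 : HEq
      (gcomp (D.compSqH (D.idSqV (D.hComp a b')) α)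
        (sqCast (D.hComp_assoc a b' b).symm rfl rfl rfl (D.compSqH (D.idSqV a) εb)))
      (gcomp (D.compSqH (D.idSqV a) (D.compSqH (D.idSqV b') α))
        (D.compSqH (D.idSqV a) εb)) :=
    gcomp_congr (D.hComp_assoc a b' a) (D.hComp_assoc a b' b) rfl e1
      (sqCast_heq _ _ _ _ _)
  have i2 : gcomp (D.compSqH (D.idSqV a) (D.compSqH (D.idSqV b') α))
        (D.compSqH (D.idSqV a) εb)
      = D.compSqH (D.idSqV a) (gcomp (D.compSqH (D.idSqV b') α) εb) :=
    lwhisker_gcomp _ _ _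
  have i3 : HEq (D.compSqH (D.compSqH (D.idSqV a) β) (D.idSqV a))
      (D.compSqH (D.idSqV a) (D.compSqH β (D.idSqV a))) := D.compSqH_assoc _ _ _
  have i6 : gcomp (D.compSqH β (D.idSqV a)) (gcomp (D.compSqH (D.idSqV b') α) εb)
      = gcomp (D.compSqH β α) εb := by
    rw [← gcomp_assoc, gcomp_hcomp, gcomp_id, id_gcomp]
  have inner : HEq
      (gcomp (D.compSqH (D.compSqH (D.idSqV a) β) (D.idSqV a))
        (gcomp (D.compSqH (D.idSqV (D.hComp a b')) α)
          (sqCast (D.hComp_assoc a b' b).symm rfl rfl rfl (D.compSqH (D.idSqV a) εb))))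
      (sqCast (D.hComp_assoc a a' a).symm rfl rfl rfl
        (D.compSqH (D.idSqV a) (gcomp (D.compSqH β α) εb))) := by
    refine HEq.trans (gcomp_congr (D.hComp_assoc a a' a) (D.hComp_assoc a b' a) rfl i3
      (i1.trans (heq_of_eq i2))) ?_
    rw [lwhisker_gcomp, i6]
    exact (sqCast_heq _ _ _ _ _).symm
  have step1 : HEq
      (gcomp α (sqCast (D.hId_comp b) (D.hComp_id a) rfl rfl
        (gcomp (D.compSqH (gcomp ηa (D.compSqH (D.idSqV a) β)) (D.idSqV b))
          (sqCast (D.hComp_assoc a b' b).symm rfl rfl rfl (D.compSqH (D.idSqV a) εb)))))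
      (gcomp (D.compSqH (D.idSqV (D.hId A)) α)
        (gcomp (D.compSqH (gcomp ηa (D.compSqH (D.idSqV a) β)) (D.idSqV b))
          (sqCast (D.hComp_assoc a b' b).symm rfl rfl rfl (D.compSqH (D.idSqV a) εb)))) :=
    gcomp_congr (D.hId_comp a).symm (D.hId_comp b).symm (D.hComp_id a).symm
      (id_hcomp_heq α).symm (sqCast_heq (D.hId_comp b) (D.hComp_id a) rfl rfl _)
  have step3 : gcomp (D.compSqH (D.idSqV (D.hId A)) α)
      (D.compSqH (gcomp ηa (D.compSqH (D.idSqV a) β)) (D.idSqV b))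
      = D.compSqH (gcomp ηa (D.compSqH (D.idSqV a) β)) α := by
    rw [gcomp_hcomp, id_gcomp, gcomp_id]
  have step4 : D.compSqH (gcomp ηa (D.compSqH (D.idSqV a) β)) α
      = gcomp (D.compSqH (gcomp ηa (D.compSqH (D.idSqV a) β)) (D.idSqV a))
        (D.compSqH (D.idSqV (D.hComp a b')) α) := by
    rw [gcomp_hcomp, gcomp_id, id_gcomp]
  have step5 : D.compSqH (gcomp ηa (D.compSqH (D.idSqV a) β)) (D.idSqV a)
      = gcomp (D.compSqH ηa (D.idSqV a))
        (D.compSqH (D.compSqH (D.idSqV a) β) (D.idSqV a)) := by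
    rw [gcomp_hcomp, gcomp_id]
  refine step1.trans (heq_of_eq ?_)
  rw [← gcomp_assoc, step3, step4, gcomp_assoc, step5, gcomp_assoc, eq_of_heq inner]

theorem keyB {A B : D.Obj} {a b : D.Hor A B} {a' b' : D.Hor B A}
    (ηa : D.Sq (D.hId A) (D.hComp a a') (D.vId A) (D.vId A))
    (εb : D.Sq (D.hComp b' b) (D.hId B) (D.vId B) (D.vId B))
    (α : D.Sq a b (D.vId A) (D.vId B)) (β : D.Sq a' b' (D.vId B) (D.vId A)) :
    HEq
      (gcomp (sqCast (D.hId_comp b) (D.hComp_id a) rfl rfl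
        (gcomp (D.compSqH (gcomp ηa (D.compSqH (D.idSqV a) β)) (D.idSqV b))
          (sqCast (D.hComp_assoc a b' b).symm rfl rfl rfl (D.compSqH (D.idSqV a) εb)))) α)
      (gcomp (D.compSqH (gcomp ηa (D.compSqH α β)) (D.idSqV b))
        (sqCast (D.hComp_assoc b b' b).symm rfl rfl rfl
          (D.compSqH (D.idSqV b) εb))) := by
  have q1 : HEq
      (gcomp (sqCast (D.hComp_assoc a b' b).symm rfl rfl rfl (D.compSqH (D.idSqV a) εb))
        (D.compSqH α (D.idSqV (D.hId B))))
      (gcomp (D.compSqH (D.idSqV a) εb) (D.compSqH α (D.idSqV (D.hId B)))) :=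
    gcomp_congr (D.hComp_assoc a b' b) rfl rfl (sqCast_heq _ _ _ _ _) HEq.rfl
  have q2 : gcomp (D.compSqH (D.idSqV a) εb) (D.compSqH α (D.idSqV (D.hId B)))
      = D.compSqH α εb := by
    rw [gcomp_hcomp, id_gcomp, gcomp_id]
  have q3 : D.compSqH α εb
      = gcomp (D.compSqH α (D.idSqV (D.hComp b' b))) (D.compSqH (D.idSqV b) εb) := by
    rw [gcomp_hcomp, gcomp_id, id_gcomp]
  have hQ : HEq
      (gcomp (sqCast (D.hComp_assoc a b' b).symm rfl rfl rfl (D.compSqH (D.idSqV a) εb))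
        (D.compSqH α (D.idSqV (D.hId B))))
      (gcomp (D.compSqH α (D.idSqV (D.hComp b' b))) (D.compSqH (D.idSqV b) εb)) :=
    q1.trans (heq_of_eq (q2.trans q3))
  have k1 : HEq
      (gcomp (D.compSqH (D.compSqH (D.idSqV a) β) (D.idSqV b))
        (gcomp (sqCast (D.hComp_assoc a b' b).symm rfl rfl rfl (D.compSqH (D.idSqV a) εb))
          (D.compSqH α (D.idSqV (D.hId B)))))
      (gcomp (D.compSqH (D.idSqV a) (D.compSqH β (D.idSqV b)))
        (gcomp (D.compSqH α (D.idSqV (D.hComp b' b))) (D.compSqH (D.idSqV b) εb))) :=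
    gcomp_congr (D.hComp_assoc a a' b) (D.hComp_assoc a b' b) rfl
      (D.compSqH_assoc _ _ _) hQ
  have k2 : gcomp (D.compSqH (D.idSqV a) (D.compSqH β (D.idSqV b)))
        (D.compSqH α (D.idSqV (D.hComp b' b)))
      = D.compSqH α (D.compSqH β (D.idSqV b)) := by
    rw [gcomp_hcomp, id_gcomp, gcomp_id]
  have k3 : HEq
      (gcomp (D.compSqH α (D.compSqH β (D.idSqV b))) (D.compSqH (D.idSqV b) εb))
      (gcomp (D.compSqH (D.compSqH α β) (D.idSqV b))
        (sqCast (D.hComp_assoc b b' b).symm rfl rfl rfl (D.compSqH (D.idSqV b) εb))) :=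
    gcomp_congr (D.hComp_assoc a a' b).symm (D.hComp_assoc b b' b).symm rfl
      (D.compSqH_assoc α β (D.idSqV b)).symm (sqCast_heq _ _ _ _ _).symm
  have hInner : gcomp (D.compSqH (D.compSqH (D.idSqV a) β) (D.idSqV b))
        (gcomp (sqCast (D.hComp_assoc a b' b).symm rfl rfl rfl (D.compSqH (D.idSqV a) εb))
          (D.compSqH α (D.idSqV (D.hId B))))
      = gcomp (D.compSqH (D.compSqH α β) (D.idSqV b))
        (sqCast (D.hComp_assoc b b' b).symm rfl rfl rfl (D.compSqH (D.idSqV b) εb)) := by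
    refine eq_of_heq (k1.trans ?_)
    rw [← gcomp_assoc, k2]
    exact k3
  have split : D.compSqH (gcomp ηa (D.compSqH (D.idSqV a) β)) (D.idSqV b)
      = gcomp (D.compSqH ηa (D.idSqV b))
        (D.compSqH (D.compSqH (D.idSqV a) β) (D.idSqV b)) := by
    rw [gcomp_hcomp, gcomp_id]
  have step1 : HEq
      (gcomp (sqCast (D.hId_comp b) (D.hComp_id a) rfl rfl
        (gcomp (D.compSqH (gcomp ηa (D.compSqH (D.idSqV a) β)) (D.idSqV b))
          (sqCast (D.hComp_assoc a b' b).symm rfl rfl rfl (D.compSqH (D.idSqV a) εb)))) α)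
      (gcomp (gcomp (D.compSqH (gcomp ηa (D.compSqH (D.idSqV a) β)) (D.idSqV b))
          (sqCast (D.hComp_assoc a b' b).symm rfl rfl rfl (D.compSqH (D.idSqV a) εb)))
        (D.compSqH α (D.idSqV (D.hId B)))) :=
    gcomp_congr (D.hId_comp b).symm (D.hComp_id a).symm (D.hComp_id b).symm
      (sqCast_heq (D.hId_comp b) (D.hComp_id a) rfl rfl _) (hcomp_id_heq α).symm
  refine step1.trans (heq_of_eq ?_)
  rw [gcomp_assoc, split, gcomp_assoc, hInner, ← gcomp_assoc, gcomp_hcomp, gcomp_id]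

end Aux

/-- **In a double category, a square with identity vertical boundaries whose
horizontal boundaries are horizontal equivalences is weakly horizontally
invertible (an equivalence in the 2-category of vertical morphisms and squares)
if and only if it is vertically invertible.** -/
theorem weaklyHorInvertible_iff_verticallyInvertible {D : DoubleCat.{u}}
    {A B : D.Obj} {a b : D.Hor A B} (ha : IsHorEquiv a) (hb : IsHorEquiv b)
    (α : D.Sq a b (D.vId A) (D.vId B)) :
    WeaklyHorInvertible α ↔ VerticallyInvertible α := by
  constructor
  · rintro ⟨a', b', ηa, ηb, εa, εb, β, hηa, hηb, hεa, hεb, w1, w2⟩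
    have eq1 : gcomp ηa (D.compSqH α β) = ηb := by
      refine eq_of_heq (gcomp_heq.trans (HEq.trans w1 ?_))
      rw [← D.idSq_coherence]; exact D.id_compSqV ηb
    have eq2 : εa = gcomp (D.compSqH β α) εb := by
      refine eq_of_heq (HEq.trans (HEq.trans ?_ w2) gcomp_heq.symm)
      rw [← D.idSq_coherence]; exact (D.compSqV_id εa).symm
    have hA := keyA ηa εb α β
    rw [← eq2] at hA
    have hB := keyB ηa εb α β
    rw [eq1] at hB
    have hTA : VerticallyInvertible
        (gcomp (D.compSqH ηa (D.idSqV a))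
          (sqCast (D.hComp_assoc a a' a).symm rfl rfl rfl (D.compSqH (D.idSqV a) εa))) :=
      vinv_gcomp (vinv_hcomp hηa (vinv_id a))
        (vinv_transfer (D.hComp_assoc a a' a).symm rfl
          (sqCast_heq (D.hComp_assoc a a' a).symm rfl rfl rfl _).symm
          (vinv_hcomp (vinv_id a) hεa))
    have hTB : VerticallyInvertible
        (gcomp (D.compSqH ηb (D.idSqV b))
          (sqCast (D.hComp_assoc b b' b).symm rfl rfl rfl (D.compSqH (D.idSqV b) εb))) :=
      vinv_gcomp (vinv_hcomp hηb (vinv_id b))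
        (vinv_transfer (D.hComp_assoc b b' b).symm rfl
          (sqCast_heq (D.hComp_assoc b b' b).symm rfl rfl rfl _).symm
          (vinv_hcomp (vinv_id b) hεb))
    exact vinv_of_comp
      (vinv_transfer (D.hId_comp a) (D.hComp_id a) hA.symm hTA)
      (vinv_transfer (D.hId_comp b) (D.hComp_id b) hB.symm hTB)
  · intro hα
    obtain ⟨α', h1, h2⟩ := (vinv_iff α).1 hα
    obtain ⟨a₀, η, ε, hη, hε⟩ := ha
    refine ⟨a₀, a₀, η, gcomp η (D.compSqH α (D.idSqV a₀)), ε,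
      gcomp (D.compSqH (D.idSqV a₀) α') ε, D.idSqV a₀, hη,
      vinv_gcomp hη (vinv_hcomp hα (vinv_id a₀)), hε,
      vinv_gcomp (vinv_hcomp (vinv_id a₀) ((vinv_iff α').2 ⟨α, h2, h1⟩)) hε,
      ?_, ?_⟩
    · refine HEq.trans gcomp_heq.symm ?_
      have : HEq (D.compSqV (D.idSqH (D.vId A)) (gcomp η (D.compSqH α (D.idSqV a₀))))
          (gcomp η (D.compSqH α (D.idSqV a₀))) := by
        rw [← D.idSq_coherence]; exact D.id_compSqV _
      exact this.symm
    · have l : HEq (D.compSqV ε (D.idSqH (D.vId B))) ε := by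
        rw [← D.idSq_coherence]; exact D.compSqV_id ε
      have r : gcomp (D.compSqH (D.idSqV a₀) α) (gcomp (D.compSqH (D.idSqV a₀) α') ε)
          = ε := by
        rw [← gcomp_assoc, lwhisker_gcomp, h1, D.idSqV_hComp, id_gcomp]
      exact l.trans ((heq_of_eq r.symm).trans gcomp_heq)


end DoubleCat
end
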